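/- An empirical model e satisfies No-Signalling if and only if e is realized by an schv model satisfying Lambda-Independence. -/

import Mathlib

open Finset
set_option maxHeartbeats 1000000

noncomputable section

/-- Restriction of a global assignment `ω : X → O` to a context `U`. -/
def restr {X O : Type} (U : Finset X) (ω : X → O) : {x // x ∈ U} → O :=
  fun x => ω x.1

/-- Restriction of a section on `U` along a subset inclusion `V ⊆ U`. -/
def restrSec {X O : Type} {U V : Finset X} (h : V ⊆ U)
    (t : {x // x ∈ U} → O) : {x // x ∈ V} → O :=
  fun x => t ⟨x.1, h x.2⟩

/-- The total weight `e(U)` of a context `U` under the table `e`. -/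
def eCtx {X O : Type} [Fintype X] [DecidableEq X] [Fintype O] [DecidableEq O]
    (𝒰 : Finset (Finset X))
    (e : (U : {U // U ∈ 𝒰}) → ({x // x ∈ U.1} → O) → ℝ)
    (U : {U // U ∈ 𝒰}) : ℝ :=
  ∑ s : {x // x ∈ U.1} → O, e U s

/-- `e` is an empirical model over the cover `𝒰`: it is a nonnegative table of
total mass one, assigning positive weight to every context. -/
def IsEmpirical {X O : Type} [Fintype X] [DecidableEq X] [Fintype O] [DecidableEq O]
    (𝒰 : Finset (Finset X))
    (e : (U : {U // U ∈ 𝒰}) → ({x // x ∈ U.1} → O) → ℝ) : Prop :=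
  (∀ U s, 0 ≤ e U s) ∧
  (∑ U : {U // U ∈ 𝒰}, eCtx 𝒰 e U = 1) ∧
  (∀ U : {U // U ∈ 𝒰}, 0 < eCtx 𝒰 e U)

/-- The conditional probability `e_U(s) = e(U,s)/e(U)`. -/
def eCond {X O : Type} [Fintype X] [DecidableEq X] [Fintype O] [DecidableEq O]
    (𝒰 : Finset (Finset X))
    (e : (U : {U // U ∈ 𝒰}) → ({x // x ∈ U.1} → O) → ℝ)
    (U : {U // U ∈ 𝒰}) (s : {x // x ∈ U.1} → O) : ℝ :=
  e U s / eCtx 𝒰 e U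

/-- The No-Signalling condition: for any two contexts, the two conditional
distributions have the same marginal on the intersection. -/
def NoSignalling {X O : Type} [Fintype X] [DecidableEq X] [Fintype O] [DecidableEq O]
    (𝒰 : Finset (Finset X))
    (e : (U : {U // U ∈ 𝒰}) → ({x // x ∈ U.1} → O) → ℝ) : Prop :=
  ∀ U U' : {U // U ∈ 𝒰}, ∀ s : {x // x ∈ U.1 ∩ U'.1} → O,
    (∑ t : {x // x ∈ U.1} → O,
      if restrSec (V := U.1 ∩ U'.1) (fun _ hx => (Finset.mem_inter.mp hx).1) t = s
        then eCond 𝒰 e U t else 0) =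
    (∑ t' : {x // x ∈ U'.1} → O,
      if restrSec (V := U.1 ∩ U'.1) (fun _ hx => (Finset.mem_inter.mp hx).2) t' = s
        then eCond 𝒰 e U' t' else 0)

/-- Marginal of an schv model on global assignments. -/
def mOmega {X O : Type} [Fintype X] [DecidableEq X] [Fintype O] [DecidableEq O]
    (𝒰 : Finset (Finset X)) (m : (X → O) → {U // U ∈ 𝒰} → ℝ) (ω : X → O) : ℝ :=
  ∑ U : {U // U ∈ 𝒰}, m ω U

/-- Marginal of an schv model on contexts. -/
def mCtx {X O : Type} [Fintype X] [DecidableEq X] [Fintype O] [DecidableEq O]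
    (𝒰 : Finset (Finset X)) (m : (X → O) → {U // U ∈ 𝒰} → ℝ) (U : {U // U ∈ 𝒰}) : ℝ :=
  ∑ ω : X → O, m ω U

/-- `m` is a signed canonical hidden-variable model: a signed measure of total mass one
on `Ω × 𝒰`. -/
def IsSchv {X O : Type} [Fintype X] [DecidableEq X] [Fintype O] [DecidableEq O]
    (𝒰 : Finset (Finset X)) (m : (X → O) → {U // U ∈ 𝒰} → ℝ) : Prop :=
  ∑ ω : X → O, ∑ U : {U // U ∈ 𝒰}, m ω U = 1

/-- Lambda-Independence: `m` factors as the product of its two marginals. -/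
def LambdaIndep {X O : Type} [Fintype X] [DecidableEq X] [Fintype O] [DecidableEq O]
    (𝒰 : Finset (Finset X)) (m : (X → O) → {U // U ∈ 𝒰} → ℝ) : Prop :=
  ∀ ω U, m ω U = mOmega 𝒰 m ω * mCtx 𝒰 m U

/-- The canonical hidden-variable model `m` realizes the empirical table `e`. -/
def Realizes {X O : Type} [Fintype X] [DecidableEq X] [Fintype O] [DecidableEq O]
    (𝒰 : Finset (Finset X)) (m : (X → O) → {U // U ∈ 𝒰} → ℝ)
    (e : (U : {U // U ∈ 𝒰}) → ({x // x ∈ U.1} → O) → ℝ) : Prop :=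
  ∀ (U : {U // U ∈ 𝒰}) (s : {x // x ∈ U.1} → O),
    e U s = ∑ ω : X → O, if restr U.1 ω = s then m ω U else 0

/-- The linear map `L : ℝ^Ω → ℝ^E`. -/
def Lmap {X O : Type} [Fintype X] [DecidableEq X] [Fintype O] [DecidableEq O]
    (𝒰 : Finset (Finset X)) (v : (X → O) → ℝ) :
    (Σ U : {U // U ∈ 𝒰}, ({x // x ∈ U.1} → O)) → ℝ :=
  fun p => ∑ ω : X → O, if restr p.1.1 ω = p.2 then v ω else 0

/-- The vector in `ℝ^E` induced by an empirical table `e`. -/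
def indVec {X O : Type} [Fintype X] [DecidableEq X] [Fintype O] [DecidableEq O]
    (𝒰 : Finset (Finset X))
    (e : (U : {U // U ∈ 𝒰}) → ({x // x ∈ U.1} → O) → ℝ) :
    (Σ U : {U // U ∈ 𝒰}, ({x // x ∈ U.1} → O)) → ℝ :=
  fun p => eCond 𝒰 e p.1 p.2


section Aux
variable {X : Type} [Fintype X] [DecidableEq X] {l : ℕ}

/-- Marginal of a pseudo-distribution on global assignments, on a context `U`. -/
def marg (U : Finset X) (d : (X → Fin l) → ℝ) (s : {x // x ∈ U} → Fin l) : ℝ :=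
  ∑ ω : X → Fin l, if restr U ω = s then d ω else 0

/-- Compatibility of two sections on the intersection of their domains. -/
def Compat {U V : Finset X} (s : {x // x ∈ U} → Fin l) (t : {x // x ∈ V} → Fin l) : Prop :=
  ∀ x : {x // x ∈ U ∩ V},
    s ⟨x.1, (Finset.mem_inter.mp x.2).1⟩ = t ⟨x.1, (Finset.mem_inter.mp x.2).2⟩

instance {U V : Finset X} (s : {x // x ∈ U} → Fin l) (t : {x // x ∈ V} → Fin l) :
    Decidable (Compat s t) := by unfold Compat; infer_instance

/-- Uniform extension of a pseudo-distribution on a context to a global one. -/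
def extd (U : Finset X) (f : ({x // x ∈ U} → Fin l) → ℝ) (ω : X → Fin l) : ℝ :=
  f (restr U ω) * ((l : ℝ) ^ (Fintype.card X - U.card))⁻¹

def glue (U V : Finset X) (s : {x // x ∈ U} → Fin l) (t : {x // x ∈ V} → Fin l)
    (g : {x // x ∈ (U ∪ V)ᶜ} → Fin l) : X → Fin l :=
  fun x => if h : x ∈ U then s ⟨x, h⟩ else if h' : x ∈ V then t ⟨x, h'⟩
    else g ⟨x, by simp [h, h']⟩

lemma card_pair (U V : Finset X) (s : {x // x ∈ U} → Fin l) (t : {x // x ∈ V} → Fin l) :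
    ((univ : Finset (X → Fin l)).filter (fun ω => restr U ω = s ∧ restr V ω = t)).card
      = if Compat s t then l ^ (Fintype.card X - (U ∪ V).card) else 0 := by
  split_ifs with hc
  · have key : ((univ : Finset (X → Fin l)).filter
        (fun ω => restr U ω = s ∧ restr V ω = t)).card
        = (univ : Finset ({x // x ∈ (U ∪ V)ᶜ} → Fin l)).card := by
      apply Finset.card_bij' (i := fun ω _ => fun x : {x // x ∈ (U ∪ V)ᶜ} => ω x.1)
        (j := fun g _ => glue U V s t g)
      · intro ω hω
        exact Finset.mem_univ _
      · intro g hg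
        simp only [Finset.mem_filter, Finset.mem_univ, true_and]
        constructor
        · funext x
          simp [restr, glue, dif_pos x.2]
        · funext x
          by_cases h : x.1 ∈ U
          · have := hc ⟨x.1, Finset.mem_inter.mpr ⟨h, x.2⟩⟩
            simp [restr, glue, dif_pos h] at this ⊢
            exact this.symm ▸ rfl
          · simp [restr, glue, dif_neg h, dif_pos x.2]
      · intro ω hω
        simp only [Finset.mem_filter, Finset.mem_univ, true_and] at hω
        funext x
        by_cases h : x ∈ U
        · simpa [glue, dif_pos h, restr] using (congrFun hω.1 ⟨x, h⟩).symm
        · by_cases h' : x ∈ V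
          · simpa [glue, dif_neg h, dif_pos h', restr] using (congrFun hω.2 ⟨x, h'⟩).symm
          · simp [glue, dif_neg h, dif_neg h']
      · intro g hg
        funext x
        have hx : x.1 ∉ U ∧ x.1 ∉ V := by
          have := x.2; simp [Finset.mem_compl, Finset.mem_union] at this; exact this
        simp [glue, dif_neg hx.1, dif_neg hx.2]
    rw [key, Finset.card_univ, Fintype.card_fun, Fintype.card_coe, Fintype.card_fin,
      Finset.card_compl]
  · rw [Finset.card_eq_zero, Finset.filter_eq_empty_iff]
    intro ω _
    rintro ⟨h1, h2⟩
    exact hc (fun x => by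
      have e1 := congrFun h1 ⟨x.1, (Finset.mem_inter.mp x.2).1⟩
      have e2 := congrFun h2 ⟨x.1, (Finset.mem_inter.mp x.2).2⟩
      rw [← e1, ← e2]; rfl)

lemma sum_ite_pair (U V : Finset X) (s : {x // x ∈ U} → Fin l) (t : {x // x ∈ V} → Fin l)
    (c : ℝ) :
    (∑ ω : X → Fin l, if restr U ω = s ∧ restr V ω = t then c else 0)
      = if Compat s t then c * (l : ℝ) ^ (Fintype.card X - (U ∪ V).card) else 0 := by
  rw [← Finset.sum_filter, Finset.sum_const, nsmul_eq_mul, _root_.card_pair]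
  split_ifs <;> push_cast <;> ring

/-- Collapse a weighted sum over sections of `V` of marginals to a sum over `ω`. -/
lemma collapse (V : Finset X) (P : ({x // x ∈ V} → Fin l) → Prop) [DecidablePred P]
    (d : (X → Fin l) → ℝ) :
    (∑ t : {x // x ∈ V} → Fin l, if P t then marg V d t else 0)
      = ∑ ω : X → Fin l, if P (restr V ω) then d ω else 0 := by
  unfold marg
  have h1 : ∀ t : {x // x ∈ V} → Fin l,
      (if P t then (∑ ω : X → Fin l, if restr V ω = t then d ω else 0) else 0)
        = ∑ ω : X → Fin l, if P t ∧ restr V ω = t then d ω else 0 := by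
    intro t
    split_ifs with h
    · exact Finset.sum_congr rfl (fun ω _ => by simp [h])
    · exact (Finset.sum_eq_zero (fun ω _ => by simp [h])).symm
  simp only [h1]
  rw [Finset.sum_comm]
  refine Finset.sum_congr rfl (fun ω _ => ?_)
  rw [Finset.sum_eq_single_of_mem (restr V ω) (Finset.mem_univ _)]
  · simp
  · intro t _ ht
    exact if_neg (fun hc => ht hc.2.symm)

lemma sum_marg (V : Finset X) (d : (X → Fin l) → ℝ) :
    (∑ t : {x // x ∈ V} → Fin l, marg V d t) = ∑ ω : X → Fin l, d ω := by
  have := collapse V (fun _ => True) d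
  simpa using this

lemma marg_ext (U V : Finset X) (f : ({x // x ∈ V} → Fin l) → ℝ)
    (s : {x // x ∈ U} → Fin l) :
    marg U (extd V f) s
      = (∑ t : {x // x ∈ V} → Fin l, if Compat s t then f t else 0)
          * ((l : ℝ) ^ (Fintype.card X - (U ∪ V).card)
              * ((l : ℝ) ^ (Fintype.card X - V.card))⁻¹) := by
  unfold marg extd
  have h1 : ∀ ω : X → Fin l,
      (if restr U ω = s then f (restr V ω) * ((l:ℝ) ^ (Fintype.card X - V.card))⁻¹ else 0)
        = ∑ t : {x // x ∈ V} → Fin l,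
            if restr U ω = s ∧ restr V ω = t
              then f t * ((l:ℝ) ^ (Fintype.card X - V.card))⁻¹ else 0 := by
    intro ω
    rw [Finset.sum_eq_single_of_mem (restr V ω) (Finset.mem_univ _)]
    · simp
    · intro t _ ht
      exact if_neg (fun hc => ht hc.2.symm)
  simp only [h1]
  rw [Finset.sum_comm]
  rw [Finset.sum_mul]
  refine Finset.sum_congr rfl (fun t _ => ?_)
  rw [sum_ite_pair]
  split_ifs <;> ring

lemma compat_self {V : Finset X} (s : {x // x ∈ V} → Fin l) : Compat s s :=
  fun _ => rfl

lemma compat_self_eq {V : Finset X} {s t : {x // x ∈ V} → Fin l} (h : Compat s t) :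
    t = s := by
  funext x
  exact (h ⟨x.1, Finset.mem_inter.mpr ⟨x.2, x.2⟩⟩).symm

lemma marg_ext_self (hl : 0 < l) (V : Finset X) (f : ({x // x ∈ V} → Fin l) → ℝ)
    (s : {x // x ∈ V} → Fin l) :
    marg V (extd V f) s = f s := by
  rw [marg_ext, Finset.union_self,
    mul_inv_cancel₀ (pow_ne_zero _ (by exact_mod_cast hl.ne'))]
  rw [mul_one]
  rw [Finset.sum_eq_single_of_mem s (Finset.mem_univ _)]
  · rw [if_pos (compat_self s)]
  · intro t _ ht
    exact if_neg (fun hc => ht (compat_self_eq hc))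

lemma sum_extd (hl : 0 < l) (V : Finset X) (f : ({x // x ∈ V} → Fin l) → ℝ) :
    (∑ ω : X → Fin l, extd V f ω) = ∑ t : {x // x ∈ V} → Fin l, f t := by
  have h := sum_marg V (extd V f)
  rw [← h]
  exact Finset.sum_congr rfl (fun t _ => marg_ext_self hl V f t)

lemma marg_add_sub (U : Finset X) (d g h : (X → Fin l) → ℝ) (s : {x // x ∈ U} → Fin l) :
    marg U (fun ω => d ω + g ω - h ω) s = marg U d s + marg U g s - marg U h s := by
  unfold marg
  rw [← Finset.sum_add_distrib, ← Finset.sum_sub_distrib]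
  exact Finset.sum_congr rfl (fun ω _ => by split_ifs <;> ring)

lemma compat_sum_eq {U V : Finset X} (s : {x // x ∈ U} → Fin l)
    (g : ({x // x ∈ V} → Fin l) → ℝ) :
    (∑ t : {x // x ∈ V} → Fin l, if Compat s t then g t else 0)
      = ∑ t : {x // x ∈ V} → Fin l,
          if restrSec (V := U ∩ V) (fun _ hx => (Finset.mem_inter.mp hx).2) t
              = restrSec (fun _ hx => (Finset.mem_inter.mp hx).1) s then g t else 0 := by
  refine Finset.sum_congr rfl fun t _ => ?_
  refine if_congr ⟨fun h => funext fun x => (h x).symm, fun h x => (congrFun h x).symm⟩ rfl rfl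

lemma exists_global {l : ℕ} (hl : 0 < l) (𝒰 : Finset (Finset X))
    (e : (U : {U // U ∈ 𝒰}) → ({x // x ∈ U.1} → Fin l) → ℝ)
    (he : IsEmpirical 𝒰 e) (hNS : NoSignalling 𝒰 e)
    (𝒮 : Finset {U // U ∈ 𝒰}) :
    ∃ d : (X → Fin l) → ℝ, (∑ ω : X → Fin l, d ω) = 1 ∧
      ∀ U ∈ 𝒮, ∀ s, marg U.1 d s = eCond 𝒰 e U s := by
  induction 𝒮 using Finset.induction_on with
  | empty =>
    exact ⟨fun ω => if ω = (fun _ => ⟨0, hl⟩) then 1 else 0, by simp, by simp⟩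
  | @insert V 𝒮 hV ih =>
    obtain ⟨d, hd1, hd2⟩ := ih
    have hsum1 : (∑ t : {x // x ∈ V.1} → Fin l, eCond 𝒰 e V t) = 1 := by
      simp only [eCond]
      rw [← Finset.sum_div]
      exact div_self (he.2.2 V).ne'
    refine ⟨fun ω => d ω + extd V.1 (eCond 𝒰 e V) ω - extd V.1 (marg V.1 d) ω, ?_, ?_⟩
    · rw [Finset.sum_sub_distrib, Finset.sum_add_distrib, sum_extd hl, sum_extd hl,
        hd1, hsum1, sum_marg, hd1]
      ring
    · intro U hU s
      rw [marg_add_sub]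
      rcases Finset.mem_insert.mp hU with h | h
      · subst h
        rw [marg_ext_self hl, marg_ext_self hl]
        ring
      · rw [hd2 U h s, marg_ext, marg_ext]
        have key : (∑ t : {x // x ∈ V.1} → Fin l, if Compat s t then eCond 𝒰 e V t else 0)
            = ∑ t : {x // x ∈ V.1} → Fin l, if Compat s t then marg V.1 d t else 0 := by
          rw [compat_sum_eq, compat_sum_eq, ← hNS U V]
          have hU' : (∑ t : {x // x ∈ U.1} → Fin l,
              if restrSec (V := U.1 ∩ V.1) (fun _ hx => (Finset.mem_inter.mp hx).1) t
                  = restrSec (fun _ hx => (Finset.mem_inter.mp hx).1) s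
                then eCond 𝒰 e U t else 0)
              = ∑ t : {x // x ∈ U.1} → Fin l,
              if restrSec (V := U.1 ∩ V.1) (fun _ hx => (Finset.mem_inter.mp hx).1) t
                  = restrSec (fun _ hx => (Finset.mem_inter.mp hx).1) s
                then marg U.1 d t else 0 :=
            Finset.sum_congr rfl (fun t _ => by rw [hd2 U h t])
          rw [hU']
          rw [collapse U.1 (fun t => restrSec (V := U.1 ∩ V.1)
              (fun _ hx => (Finset.mem_inter.mp hx).1) t
                = restrSec (fun _ hx => (Finset.mem_inter.mp hx).1) s) d]
          rw [collapse V.1 (fun t => restrSec (V := U.1 ∩ V.1)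
              (fun _ hx => (Finset.mem_inter.mp hx).2) t
                = restrSec (fun _ hx => (Finset.mem_inter.mp hx).1) s) d]
          rfl
        rw [key]
        ring

end Aux

/-- Main Theorem: an empirical model is No-Signalling iff it is
realized by an schv model satisfying Lambda-Independence. -/
theorem noSignalling_iff_lambdaIndep_realization {X : Type} [Fintype X] [DecidableEq X]
    (l : ℕ) (hl : 0 < l) (𝒰 : Finset (Finset X))
    (e : (U : {U // U ∈ 𝒰}) → ({x // x ∈ U.1} → Fin l) → ℝ)
    (he : IsEmpirical 𝒰 e) :
    NoSignalling 𝒰 e ↔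
      ∃ m : (X → Fin l) → {U // U ∈ 𝒰} → ℝ,
        IsSchv 𝒰 m ∧ LambdaIndep 𝒰 m ∧ Realizes 𝒰 m e := by
  constructor
  · intro hNS
    obtain ⟨d, hd1, hd2⟩ := exists_global hl 𝒰 e he hNS Finset.univ
    refine ⟨fun ω U => d ω * eCtx 𝒰 e U, ?_, ?_, ?_⟩
    · unfold IsSchv
      calc (∑ ω : X → Fin l, ∑ U : {U // U ∈ 𝒰}, d ω * eCtx 𝒰 e U)
          = ∑ ω : X → Fin l, d ω * ∑ U : {U // U ∈ 𝒰}, eCtx 𝒰 e U := by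
            exact Finset.sum_congr rfl (fun ω _ => (Finset.mul_sum _ _ _).symm)
        _ = 1 := by rw [he.2.1]; simpa using hd1
    · intro ω U
      have h1 : mOmega 𝒰 (fun ω U => d ω * eCtx 𝒰 e U) ω = d ω := by
        unfold mOmega
        rw [← Finset.mul_sum, he.2.1, mul_one]
      have h2 : mCtx 𝒰 (fun ω U => d ω * eCtx 𝒰 e U) U = eCtx 𝒰 e U := by
        unfold mCtx
        rw [← Finset.sum_mul, hd1, one_mul]
      rw [h1, h2]
    · intro U s
      have h3 : (∑ ω : X → Fin l, if restr U.1 ω = s then d ω * eCtx 𝒰 e U else 0)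
          = marg U.1 d s * eCtx 𝒰 e U := by
        rw [marg, Finset.sum_mul]
        exact Finset.sum_congr rfl (fun ω _ => by split_ifs <;> ring)
      rw [h3, hd2 U (Finset.mem_univ U) s, eCond, div_mul_cancel₀ _ (he.2.2 U).ne']
  · rintro ⟨m, hs, hli, hr⟩
    set p := mOmega 𝒰 m with hp
    set q := mCtx 𝒰 m with hq
    have hpsum : (∑ ω : X → Fin l, p ω) = 1 := by
      simpa [hp, mOmega, IsSchv] using hs
    have hE : ∀ (U : {U // U ∈ 𝒰}) (s : {x // x ∈ U.1} → Fin l),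
        e U s = marg U.1 p s * q U := by
      intro U s
      rw [hr U s, marg, Finset.sum_mul]
      exact Finset.sum_congr rfl (fun ω _ => by
        rw [hli ω U]
        split_ifs <;> ring)
    have hCtx : ∀ U : {U // U ∈ 𝒰}, eCtx 𝒰 e U = q U := by
      intro U
      unfold eCtx
      calc (∑ s : {x // x ∈ U.1} → Fin l, e U s)
          = ∑ s : {x // x ∈ U.1} → Fin l, marg U.1 p s * q U :=
            Finset.sum_congr rfl (fun s _ => hE U s)
        _ = (∑ s : {x // x ∈ U.1} → Fin l, marg U.1 p s) * q U := by rw [Finset.sum_mul]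
        _ = q U := by rw [sum_marg, hpsum, one_mul]
    have hCond : ∀ (U : {U // U ∈ 𝒰}) (s : {x // x ∈ U.1} → Fin l),
        eCond 𝒰 e U s = marg U.1 p s := by
      intro U s
      have hq0 : q U ≠ 0 := by rw [← hCtx U]; exact (he.2.2 U).ne'
      rw [eCond, hE U s, hCtx U, mul_div_assoc, div_self hq0, mul_one]
    intro U U' s
    have h1 : (∑ t : {x // x ∈ U.1} → Fin l,
        if restrSec (V := U.1 ∩ U'.1) (fun _ hx => (Finset.mem_inter.mp hx).1) t = s
          then eCond 𝒰 e U t else 0)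
        = ∑ t : {x // x ∈ U.1} → Fin l,
            if restrSec (V := U.1 ∩ U'.1) (fun _ hx => (Finset.mem_inter.mp hx).1) t = s
              then marg U.1 p t else 0 :=
      Finset.sum_congr rfl (fun t _ => by rw [hCond U t])
    have h2 : (∑ t : {x // x ∈ U'.1} → Fin l,
        if restrSec (V := U.1 ∩ U'.1) (fun _ hx => (Finset.mem_inter.mp hx).2) t = s
          then eCond 𝒰 e U' t else 0)
        = ∑ t : {x // x ∈ U'.1} → Fin l,
            if restrSec (V := U.1 ∩ U'.1) (fun _ hx => (Finset.mem_inter.mp hx).2) t = s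
              then marg U'.1 p t else 0 :=
      Finset.sum_congr rfl (fun t _ => by rw [hCond U' t])
    rw [h1, h2]
    rw [collapse U.1 (fun t => restrSec (V := U.1 ∩ U'.1)
        (fun _ hx => (Finset.mem_inter.mp hx).1) t = s) p]
    rw [collapse U'.1 (fun t => restrSec (V := U.1 ∩ U'.1)
        (fun _ hx => (Finset.mem_inter.mp hx).2) t = s) p]
    rfl
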